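/- arXiv:2309.16094 — 2 statements merged into one kernel-verified Lean document; each statement's English description precedes it below -/
import Mathlib

section
/- Let x, y, z ∈ ℂ with |x| < 1, |y| < 1, |z| < 1, x ≠ 1 and y ≠ 1. Then the infinite product over all triples of integers (a,b,c) with a ≥ 0, b ≥ 0, c ≥ 1, a < c, b < c and gcd(a,b,c) = 1 of (1/(1 − x^a y^b z^c))^(1/c) equals ( (1 − xz)(1 − yz) / ((1 − z)(1 − xyz)) )^( 1/((1 − x)(1 − y)) ). -/
open Complex

lemma aux_one_sub_ne {w : ℂ} (h : ‖w‖ < 1) : 1 - w ≠ 0 := by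
  intro hc
  rw [sub_eq_zero] at hc
  rw [← hc] at h
  simp at h

lemma aux_slit {w : ℂ} (h : ‖w‖ < 1) : 1 - w ∈ Complex.slitPlane := by
  rw [sub_eq_add_neg]
  exact mem_slitPlane_of_norm_lt_one (by rwa [norm_neg])

lemma aux_norm_mul_lt {a w : ℂ} (ha : ‖a‖ ≤ 1) (hw : ‖w‖ < 1) : ‖a * w‖ < 1 := by
  rw [norm_mul]
  exact lt_of_le_of_lt (mul_le_of_le_one_left (norm_nonneg _) ha) hw

lemma aux_normSq_lt {w : ℂ} (h : ‖w‖ < 1) : normSq w < 1 := by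
  rw [Complex.normSq_eq_norm_sq]
  nlinarith [norm_nonneg w]

lemma aux_key {x y z : ℂ} (hx : ‖x‖ < 1) (hy : ‖y‖ < 1) (hz : ‖z‖ < 1)
    {r : ℝ} (hr : r ≤ 0) :
    (1 - x * z) * (1 - y * z) ≠ (r : ℂ) * ((1 - z) * (1 - x * y * z)) := by
  intro h
  have hxz := aux_one_sub_ne (aux_norm_mul_lt hx.le hz)
  have hyz := aux_one_sub_ne (aux_norm_mul_lt hy.le hz)
  rcases eq_or_lt_of_le hr with rfl | hrlt
  · simp only [ofReal_zero, zero_mul] at h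
    exact (mul_ne_zero hxz hyz) h
  · have ht : 0 < -r := by linarith
    set t : ℝ := -r with htdef
    have hrc : (r : ℂ) = -(t : ℂ) := by simp [htdef]
    rw [hrc] at h
    have hPR : (1 - y * z) + (t : ℂ) * (1 - z) =
        x * (z * ((1 - y * z) + (t : ℂ) * y * (1 - z))) := by
      linear_combination h
    have hid : normSq ((1 - y * z) + (t : ℂ) * (1 - z)) -
        normSq (z * ((1 - y * z) + (t : ℂ) * y * (1 - z))) =
        (1 + t) * (normSq (1 - y * z) * (1 - normSq z) +
          t * (normSq (1 - z) * (1 - normSq (y * z)))) := by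
      simp only [normSq_apply, mul_re, mul_im, sub_re, sub_im, add_re, add_im,
        one_re, one_im, ofReal_re, ofReal_im]
      ring
    have h1 : 0 < normSq (1 - y * z) := normSq_pos.2 hyz
    have h2 := aux_normSq_lt hz
    have h3 := aux_normSq_lt (aux_norm_mul_lt hy.le hz)
    have hxsq := aux_normSq_lt hx
    have hpos : 0 < normSq ((1 - y * z) + (t : ℂ) * (1 - z)) -
        normSq (z * ((1 - y * z) + (t : ℂ) * y * (1 - z))) := by
      rw [hid]
      have e1 : 0 < normSq (1 - y * z) * (1 - normSq z) := mul_pos h1 (by linarith)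
      have e2 : 0 ≤ t * (normSq (1 - z) * (1 - normSq (y * z))) :=
        mul_nonneg ht.le (mul_nonneg (normSq_nonneg _) (by linarith))
      nlinarith
    have hle : normSq ((1 - y * z) + (t : ℂ) * (1 - z)) ≤
        normSq (z * ((1 - y * z) + (t : ℂ) * y * (1 - z))) := by
      rw [hPR, normSq_mul]
      exact mul_le_of_le_one_left (normSq_nonneg _) hxsq.le
    linarith

lemma aux_re_pos {w : ℂ} (h : ‖w‖ < 1) : 0 < (1 - w).re := by
  have h2 : |w.re| ≤ ‖w‖ := Complex.abs_re_le_norm w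
  simp only [sub_re, one_re]
  cases abs_le.1 h2 with
  | intro h3 h4 => linarith

lemma aux_im_log_lt {w : ℂ} (h : ‖w‖ < 1) : |(Complex.log (1 - w)).im| < Real.pi / 2 := by
  rw [Complex.log_im]
  exact Complex.abs_arg_lt_pi_div_two_iff.2 (Or.inl (aux_re_pos h))

lemma aux_exp_quad {a b c d : ℂ} (ha : a ≠ 0) (hb : b ≠ 0) (hc : c ≠ 0) (hd : d ≠ 0) :
    cexp (log a + log b - log c - log d) = a * b / (c * d) := by
  rw [Complex.exp_sub, Complex.exp_sub, Complex.exp_add, Complex.exp_log ha,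
    Complex.exp_log hb, Complex.exp_log hc, Complex.exp_log hd, div_div]

lemma aux_exp_neg_pi {w : ℂ} (hpi : w.im = Real.pi ∨ w.im = -Real.pi) :
    cexp w = ((-Real.exp w.re : ℝ) : ℂ) := by
  cases hpi with
  | inl h =>
    rw [Complex.exp_eq_exp_re_mul_sin_add_cos, h]
    push_cast
    simp [Complex.cos_pi, Complex.sin_pi, ← Complex.ofReal_exp]
  | inr h =>
    rw [Complex.exp_eq_exp_re_mul_sin_add_cos, h]
    push_cast
    simp [← Complex.ofReal_exp]

lemma aux_branch {x y z : ℂ} (hx : ‖x‖ < 1) (hy : ‖y‖ < 1) (hz : ‖z‖ < 1) :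
    Complex.log ((1 - x * z) * (1 - y * z) / ((1 - z) * (1 - x * y * z))) =
      Complex.log (1 - x * z) + Complex.log (1 - y * z) -
        Complex.log (1 - z) - Complex.log (1 - x * y * z) := by
  have hxy : ‖x * y‖ ≤ 1 := by
    rw [norm_mul]
    nlinarith [norm_nonneg x, norm_nonneg y]
  have hsz : ∀ s : ℝ, s ∈ Set.Icc (0:ℝ) 1 → ‖(s : ℂ) * z‖ < 1 := by
    intro s hs
    rw [norm_mul, Complex.norm_real, Real.norm_eq_abs, _root_.abs_of_nonneg hs.1]
    exact lt_of_le_of_lt (mul_le_of_le_one_left (norm_nonneg _) hs.2) hz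
  set F : ℝ → ℂ := fun s => Complex.log (1 - x * ((s : ℂ) * z)) +
      Complex.log (1 - y * ((s : ℂ) * z)) - Complex.log (1 - (s : ℂ) * z) -
      Complex.log (1 - x * y * ((s : ℂ) * z)) with hFdef
  have hcont : ContinuousOn (fun s => (F s).im) (Set.Icc (0:ℝ) 1) := by
    apply Complex.continuous_im.comp_continuousOn
    have c0 : Continuous fun s : ℝ => (s : ℂ) * z :=
      Complex.continuous_ofReal.mul continuous_const
    have mk : ∀ w : ℂ, ‖w‖ ≤ 1 → ContinuousOn
        (fun s : ℝ => Complex.log (1 - w * ((s : ℂ) * z))) (Set.Icc (0:ℝ) 1) := by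
      intro w hw
      apply ContinuousOn.clog
      · exact (continuous_const.sub (continuous_const.mul c0)).continuousOn
      · intro s hs
        exact aux_slit (aux_norm_mul_lt hw (hsz s hs))
    have m3 : ContinuousOn (fun s : ℝ => Complex.log (1 - (s : ℂ) * z))
        (Set.Icc (0:ℝ) 1) := by
      apply ContinuousOn.clog
      · exact (continuous_const.sub c0).continuousOn
      · intro s hs
        exact aux_slit (hsz s hs)
    exact (((mk x hx.le).add (mk y hy.le)).sub m3).sub (mk (x * y) hxy)
  have hexp : ∀ s : ℝ, s ∈ Set.Icc (0:ℝ) 1 → cexp (F s) =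
      (1 - x * ((s : ℂ) * z)) * (1 - y * ((s : ℂ) * z)) /
        ((1 - (s : ℂ) * z) * (1 - x * y * ((s : ℂ) * z))) := by
    intro s hs
    exact aux_exp_quad (aux_one_sub_ne (aux_norm_mul_lt hx.le (hsz s hs)))
      (aux_one_sub_ne (aux_norm_mul_lt hy.le (hsz s hs)))
      (aux_one_sub_ne (hsz s hs))
      (aux_one_sub_ne (aux_norm_mul_lt hxy (hsz s hs)))
  have noPi : ∀ s : ℝ, s ∈ Set.Icc (0:ℝ) 1 →
      (F s).im ≠ Real.pi ∧ (F s).im ≠ -Real.pi := by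
    intro s hs
    have hnum : (1 - x * ((s : ℂ) * z)) * (1 - y * ((s : ℂ) * z)) =
        cexp (F s) * ((1 - (s : ℂ) * z) * (1 - x * y * ((s : ℂ) * z))) := by
      rw [hexp s hs, div_mul_cancel₀]
      exact mul_ne_zero (aux_one_sub_ne (hsz s hs))
        (aux_one_sub_ne (aux_norm_mul_lt hxy (hsz s hs)))
    have key : ∀ hpi : (F s).im = Real.pi ∨ (F s).im = -Real.pi, False := by
      intro hpi
      have hneg := aux_exp_neg_pi hpi
      have hr : (-Real.exp (F s).re) ≤ 0 := neg_nonpos.2 (Real.exp_pos _).le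
      exact aux_key hx hy (hsz s hs) hr (by rw [← hneg]; exact hnum)
    exact ⟨fun h => key (Or.inl h), fun h => key (Or.inr h)⟩
  have hF0 : (F 0).im = 0 := by
    simp [hFdef]
  have hF1 : F 1 = Complex.log (1 - x * z) + Complex.log (1 - y * z) -
      Complex.log (1 - z) - Complex.log (1 - x * y * z) := by
    simp [hFdef]
  have hlt : (F 1).im < Real.pi := by
    by_contra hge
    push_neg at hge
    have hmem : Real.pi ∈ Set.Icc ((fun s => (F s).im) 0) ((fun s => (F s).im) 1) := by
      simp only [hF0]
      exact ⟨Real.pi_pos.le, hge⟩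
    obtain ⟨s, hs, hks⟩ := intermediate_value_Icc zero_le_one hcont hmem
    exact (noPi s hs).1 hks
  have hgt : -Real.pi < (F 1).im := by
    by_contra hle
    push_neg at hle
    have hmem : -Real.pi ∈ Set.Icc ((fun s => (F s).im) 1) ((fun s => (F s).im) 0) := by
      simp only [hF0]
      exact ⟨hle, by linarith [Real.pi_pos]⟩
    obtain ⟨s, hs, hks⟩ := intermediate_value_Icc' zero_le_one hcont hmem
    exact (noPi s hs).2 hks
  have hQ : cexp (F 1) = (1 - x * z) * (1 - y * z) / ((1 - z) * (1 - x * y * z)) := by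
    rw [hexp 1 (by norm_num)]
    norm_num
  rw [← hF1, ← hQ, Complex.log_exp hgt hlt.le]

lemma aux_taylor {w : ℂ} (hw : ‖w‖ < 1) :
    HasSum (fun n : ℕ => w ^ (n + 1) / ((n : ℂ) + 1)) (-Complex.log (1 - w)) := by
  have h := Complex.hasSum_taylorSeries_neg_log hw
  have h2 : HasSum (fun n : ℕ => w ^ (n + 1) / (((n + 1 : ℕ)) : ℂ))
      (-Complex.log (1 - w)) :=
    (hasSum_nat_add_iff (f := fun n : ℕ => w ^ n / (n : ℂ)) 1).2 (by simpa using h)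
  convert h2 using 2
  push_cast
  ring

lemma aux_norm_mul_lt' {a w : ℂ} (ha : ‖a‖ ≤ 1) (hw : ‖w‖ < 1) : ‖a * w‖ < 1 := by
  rw [norm_mul]
  exact lt_of_le_of_lt (mul_le_of_le_one_left (norm_nonneg _) ha) hw

lemma aux_hasSum_sigma {x y z : ℂ} (hx : ‖x‖ < 1) (hy : ‖y‖ < 1) (hz : ‖z‖ < 1)
    (hx1 : x ≠ 1) (hy1 : y ≠ 1) :
    HasSum (fun σ : (c : ℕ) × (Fin (c + 1) × Fin (c + 1)) =>
        x ^ (σ.2.1 : ℕ) * y ^ (σ.2.2 : ℕ) * z ^ (σ.1 + 1) / ((σ.1 : ℂ) + 1))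
      ((Complex.log (1 - x * z) + Complex.log (1 - y * z) - Complex.log (1 - z) -
        Complex.log (1 - x * y * z)) / ((1 - x) * (1 - y))) := by
  set h₀ : ((c : ℕ) × (Fin (c + 1) × Fin (c + 1))) → ℂ := fun σ =>
    x ^ (σ.2.1 : ℕ) * y ^ (σ.2.2 : ℕ) * z ^ (σ.1 + 1) / ((σ.1 : ℂ) + 1) with hh₀
  have hnormle : ∀ σ : (c : ℕ) × (Fin (c + 1) × Fin (c + 1)),
      ‖h₀ σ‖ ≤ ‖z‖ ^ (σ.1 + 1) := by
    intro σ
    rw [hh₀]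
    simp only [norm_div, norm_mul, norm_pow]
    have hd : (1:ℝ) ≤ ‖(σ.1 : ℂ) + 1‖ := by
      have : ((σ.1 : ℂ) + 1) = ((σ.1 + 1 : ℕ) : ℂ) := by push_cast; ring
      rw [this, Complex.norm_natCast]
      exact_mod_cast Nat.succ_le_succ (Nat.zero_le _)
    calc ‖x‖ ^ (σ.2.1 : ℕ) * ‖y‖ ^ (σ.2.2 : ℕ) * ‖z‖ ^ (σ.1 + 1) / ‖(σ.1 : ℂ) + 1‖
        ≤ ‖x‖ ^ (σ.2.1 : ℕ) * ‖y‖ ^ (σ.2.2 : ℕ) * ‖z‖ ^ (σ.1 + 1) :=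
          div_le_self (by positivity) hd
      _ ≤ 1 * 1 * ‖z‖ ^ (σ.1 + 1) := by
          gcongr
          · exact pow_le_one₀ (norm_nonneg _) hx.le
          · exact pow_le_one₀ (norm_nonneg _) hy.le
      _ = ‖z‖ ^ (σ.1 + 1) := by ring
  have hnsum : Summable (fun σ : (c : ℕ) × (Fin (c + 1) × Fin (c + 1)) => ‖h₀ σ‖) := by
    rw [summable_sigma_of_nonneg (fun _ => norm_nonneg _)]
    refine ⟨fun c => Summable.of_finite, ?_⟩
    apply Summable.of_nonneg_of_le (fun c => tsum_nonneg (fun p => norm_nonneg _))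
      (f := fun c : ℕ => (((c + 1) * (c + 1) : ℕ) : ℝ) * ‖z‖ ^ (c + 1))
    · intro c
      rw [tsum_fintype]
      calc (∑ p : Fin (c+1) × Fin (c+1), ‖h₀ ⟨c, p⟩‖)
          ≤ (Finset.univ : Finset (Fin (c+1) × Fin (c+1))).card • ‖z‖ ^ (c + 1) :=
            Finset.sum_le_card_nsmul _ _ _ (fun p _ => hnormle ⟨c, p⟩)
        _ = (((c + 1) * (c + 1) : ℕ) : ℝ) * ‖z‖ ^ (c + 1) := by
            rw [Finset.card_univ, Fintype.card_prod, Fintype.card_fin, nsmul_eq_mul]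
    · have hz' : ‖(‖z‖)‖ < 1 := by
        rwa [Real.norm_eq_abs, _root_.abs_of_nonneg (norm_nonneg z)]
      have h2 := summable_pow_mul_geometric_of_norm_lt_one (R := ℝ) 2 hz'
      have h3 := (summable_nat_add_iff (f := fun n : ℕ => (n : ℝ) ^ 2 * ‖z‖ ^ n) 1).2 h2
      apply h3.congr
      intro c
      push_cast
      ring
  have hsummable : Summable h₀ := hnsum.of_norm
  -- inner sums
  have hx1' : x - 1 ≠ 0 := sub_ne_zero.2 hx1
  have hy1' : y - 1 ≠ 0 := sub_ne_zero.2 hy1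
  have hinner : ∀ c : ℕ, (∑' p : Fin (c + 1) × Fin (c + 1), h₀ ⟨c, p⟩) =
      ((x ^ (c + 1) - 1) / (x - 1)) * ((y ^ (c + 1) - 1) / (y - 1)) *
        (z ^ (c + 1) / ((c : ℂ) + 1)) := by
    intro c
    rw [tsum_fintype, Fintype.sum_prod_type]
    have : ∀ a : Fin (c + 1), ∀ b : Fin (c + 1), h₀ ⟨c, (a, b)⟩ =
        x ^ (a : ℕ) * (y ^ (b : ℕ) * (z ^ (c + 1) / ((c : ℂ) + 1))) := by
      intro a b
      rw [hh₀]
      ring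
    simp_rw [this, ← Finset.mul_sum, ← Finset.sum_mul, Fin.sum_univ_eq_sum_range,
      geom_sum_eq hx1, geom_sum_eq hy1]
    ring
  -- the c-indexed series
  have HZ := aux_taylor hz
  have HXZ := aux_taylor (aux_norm_mul_lt' hx.le hz)
  have HYZ := aux_taylor (aux_norm_mul_lt' hy.le hz)
  have hxy : ‖x * y‖ ≤ 1 := by
    rw [norm_mul]; nlinarith [norm_nonneg x, norm_nonneg y]
  have HXYZ := aux_taylor (aux_norm_mul_lt' hxy hz)
  have comb := (((HZ.sub HXZ).sub HYZ).add HXYZ).div_const ((1 - x) * (1 - y))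
  have hcomb : HasSum (fun c : ℕ =>
      ((x ^ (c + 1) - 1) / (x - 1)) * ((y ^ (c + 1) - 1) / (y - 1)) *
        (z ^ (c + 1) / ((c : ℂ) + 1)))
      ((Complex.log (1 - x * z) + Complex.log (1 - y * z) - Complex.log (1 - z) -
        Complex.log (1 - x * y * z)) / ((1 - x) * (1 - y))) := by
    convert comb using 1
    · rfl
    · funext c
      have hc : ((c : ℂ) + 1) ≠ 0 := Nat.cast_add_one_ne_zero c
      have hx2 : (1:ℂ) - x ≠ 0 := sub_ne_zero.2 (Ne.symm hx1)
      have hy2 : (1:ℂ) - y ≠ 0 := sub_ne_zero.2 (Ne.symm hy1)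
      field_simp
      ring
    · ring
  -- assemble
  have := hsummable.hasSum
  rwa [Summable.tsum_sigma' (fun c => Summable.of_finite) hsummable, tsum_congr hinner,
    hcomb.tsum_eq] at this

-- norm of monomial < 1
lemma aux_mono_norm {x y z : ℂ} (hx : ‖x‖ < 1) (hy : ‖y‖ < 1) (hz : ‖z‖ < 1)
    (a b c : ℕ) (hc : 1 ≤ c) : ‖x ^ a * y ^ b * z ^ c‖ < 1 := by
  have e1 : ‖x ^ a‖ ≤ 1 := by rw [norm_pow]; exact pow_le_one₀ (norm_nonneg _) hx.le
  have e2 : ‖y ^ b‖ ≤ 1 := by rw [norm_pow]; exact pow_le_one₀ (norm_nonneg _) hy.le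
  have e3 : ‖z ^ c‖ < 1 := by
    rw [norm_pow]
    calc ‖z‖ ^ c ≤ ‖z‖ ^ 1 := pow_le_pow_of_le_one (norm_nonneg _) hz.le hc
      _ = ‖z‖ := pow_one _
      _ < 1 := hz
  have e12 : ‖x ^ a * y ^ b‖ ≤ 1 := by
    rw [norm_mul]
    nlinarith [norm_nonneg (x ^ a), norm_nonneg (y ^ b)]
  exact aux_norm_mul_lt e12 e3

lemma aux_hasSum_T {x y z : ℂ} (hx : ‖x‖ < 1) (hy : ‖y‖ < 1) (hz : ‖z‖ < 1)
    (hx1 : x ≠ 1) (hy1 : y ≠ 1) :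
    HasSum (fun p : {p : ℕ × ℕ × ℕ // 1 ≤ p.2.2 ∧ p.1 < p.2.2 ∧ p.2.1 < p.2.2 ∧
        Nat.gcd p.1 (Nat.gcd p.2.1 p.2.2) = 1} =>
      -Complex.log (1 - x ^ p.1.1 * y ^ p.1.2.1 * z ^ p.1.2.2) / (p.1.2.2 : ℂ))
      ((Complex.log (1 - x * z) + Complex.log (1 - y * z) - Complex.log (1 - z) -
        Complex.log (1 - x * y * z)) / ((1 - x) * (1 - y))) := by
  set L := (Complex.log (1 - x * z) + Complex.log (1 - y * z) - Complex.log (1 - z) -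
        Complex.log (1 - x * y * z)) / ((1 - x) * (1 - y)) with hL
  set H : {q : ℕ × ℕ × ℕ // 1 ≤ q.2.2 ∧ q.1 < q.2.2 ∧ q.2.1 < q.2.2} → ℂ :=
    fun q => x ^ q.1.1 * y ^ q.1.2.1 * z ^ q.1.2.2 / (q.1.2.2 : ℂ) with hH
  -- step 1: HasSum H L via the sigma equiv
  have hHsum : HasSum H L := by
    have hbij : Function.Bijective (fun σ : (c : ℕ) × (Fin (c + 1) × Fin (c + 1)) =>
        (⟨((σ.2.1 : ℕ), (σ.2.2 : ℕ), σ.1 + 1), Nat.le_add_left 1 σ.1, σ.2.1.isLt, σ.2.2.isLt⟩ :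
          {q : ℕ × ℕ × ℕ // 1 ≤ q.2.2 ∧ q.1 < q.2.2 ∧ q.2.1 < q.2.2})) := by
      constructor
      · rintro ⟨c, a, b⟩ ⟨c', a', b'⟩ h
        simp only [Subtype.mk.injEq, Prod.mk.injEq] at h
        obtain ⟨h1, h2, h3⟩ := h
        have hc : c = c' := by omega
        subst hc
        simp only [Sigma.mk.inj_iff, heq_eq_eq, Prod.mk.injEq]
        refine ⟨by trivial, Fin.ext h1, Fin.ext h2⟩
      · rintro ⟨⟨A, B, C⟩, hC, hA, hB⟩
        dsimp only at hC hA hB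
        refine ⟨⟨C - 1, ⟨A, by omega⟩, ⟨B, by omega⟩⟩, ?_⟩
        apply Subtype.ext
        simp only [Prod.mk.injEq]
        exact ⟨trivial, trivial, by omega⟩
    set e := Equiv.ofBijective _ hbij with he
    rw [← Equiv.hasSum_iff e]
    have hs := aux_hasSum_sigma hx hy hz hx1 hy1
    convert hs using 1
    funext σ
    simp only [hH, Function.comp, he, Equiv.ofBijective_apply]
    push_cast
    ring
  -- step 2: the scaling map
  set Φ : ({p : ℕ × ℕ × ℕ // 1 ≤ p.2.2 ∧ p.1 < p.2.2 ∧ p.2.1 < p.2.2 ∧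
        Nat.gcd p.1 (Nat.gcd p.2.1 p.2.2) = 1} × ℕ) →
      {q : ℕ × ℕ × ℕ // 1 ≤ q.2.2 ∧ q.1 < q.2.2 ∧ q.2.1 < q.2.2} :=
    fun pk => ⟨((pk.2 + 1) * pk.1.1.1, (pk.2 + 1) * pk.1.1.2.1, (pk.2 + 1) * pk.1.1.2.2),
      Nat.one_le_iff_ne_zero.2 (Nat.mul_ne_zero (Nat.succ_ne_zero _)
        (Nat.one_le_iff_ne_zero.1 pk.1.2.1)),
      mul_lt_mul_of_pos_left pk.1.2.2.1 (Nat.succ_pos _),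
      mul_lt_mul_of_pos_left pk.1.2.2.2.1 (Nat.succ_pos _)⟩ with hΦ
  have hinj : Function.Injective Φ := by
    rintro ⟨⟨⟨a, b, c⟩, hc, ha, hb, hg⟩, k⟩ ⟨⟨⟨a', b', c'⟩, hc', ha', hb', hg'⟩, l⟩ h
    simp only [hΦ, Subtype.mk.injEq, Prod.mk.injEq] at h
    obtain ⟨h1, h2, h3⟩ := h
    have hk : k + 1 = Nat.gcd ((k+1)*a) (Nat.gcd ((k+1)*b) ((k+1)*c)) := by
      rw [Nat.gcd_mul_left, Nat.gcd_mul_left, hg, mul_one]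
    have hl : l + 1 = Nat.gcd ((l+1)*a') (Nat.gcd ((l+1)*b') ((l+1)*c')) := by
      rw [Nat.gcd_mul_left, Nat.gcd_mul_left, hg', mul_one]
    have hkl : k = l := by
      rw [h1, h2, h3] at hk
      rw [← hl] at hk
      omega
    subst hkl
    have e1 : a = a' := Nat.eq_of_mul_eq_mul_left (Nat.succ_pos k) h1
    have e2 : b = b' := Nat.eq_of_mul_eq_mul_left (Nat.succ_pos k) h2
    have e3 : c = c' := Nat.eq_of_mul_eq_mul_left (Nat.succ_pos k) h3
    subst e1; subst e2; subst e3
    rfl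
  have hsurj : Function.Surjective Φ := by
    rintro ⟨⟨A, B, C⟩, hC, hA, hB⟩
    dsimp only at hC hA hB
    set d := Nat.gcd A (Nat.gcd B C) with hd
    have hdA : d ∣ A := Nat.gcd_dvd_left _ _
    have hdB : d ∣ B := (Nat.gcd_dvd_right _ _).trans (Nat.gcd_dvd_left _ _)
    have hdC : d ∣ C := (Nat.gcd_dvd_right _ _).trans (Nat.gcd_dvd_right _ _)
    have dpos : 0 < d := Nat.gcd_pos_of_pos_right _ (Nat.gcd_pos_of_pos_right _ (by omega))
    have hA' : d * (A / d) = A := Nat.mul_div_cancel' hdA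
    have hB' : d * (B / d) = B := Nat.mul_div_cancel' hdB
    have hC' : d * (C / d) = C := Nat.mul_div_cancel' hdC
    have hg : Nat.gcd (A / d) (Nat.gcd (B / d) (C / d)) = 1 := by
      have : d * Nat.gcd (A / d) (Nat.gcd (B / d) (C / d)) = d * 1 := by
        rw [mul_one, ← Nat.gcd_mul_left, ← Nat.gcd_mul_left, hA', hB', hC']
      exact Nat.eq_of_mul_eq_mul_left dpos this
    have hcpos : 1 ≤ C / d := Nat.div_pos (Nat.le_of_dvd (by omega) hdC) dpos
    have hac : A / d < C / d := by
      apply lt_of_mul_lt_mul_left _ (Nat.zero_le d)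
      rw [hA', hC']; exact hA
    have hbc : B / d < C / d := by
      apply lt_of_mul_lt_mul_left _ (Nat.zero_le d)
      rw [hB', hC']; exact hB
    refine ⟨⟨⟨(A / d, B / d, C / d), hcpos, hac, hbc, hg⟩, d - 1⟩, ?_⟩
    apply Subtype.ext
    simp only [hΦ]
    have hd1 : d - 1 + 1 = d := Nat.succ_pred_eq_of_pos dpos
    rw [hd1, hA', hB', hC']
  have hfib : ∀ p : {p : ℕ × ℕ × ℕ // 1 ≤ p.2.2 ∧ p.1 < p.2.2 ∧ p.2.1 < p.2.2 ∧
      Nat.gcd p.1 (Nat.gcd p.2.1 p.2.2) = 1},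
      HasSum (fun k : ℕ => H (Φ (p, k)))
        (-Complex.log (1 - x ^ p.1.1 * y ^ p.1.2.1 * z ^ p.1.2.2) / (p.1.2.2 : ℂ)) := by
    rintro ⟨⟨a, b, c⟩, hc, ha, hb, hg⟩
    dsimp only at hc ha hb hg ⊢
    have hm := aux_mono_norm hx hy hz a b c hc
    have base := (aux_taylor hm).div_const (c : ℂ)
    convert base using 1
    rfl
    funext k
    simp only [hH, hΦ]
    rw [pow_mul', pow_mul', pow_mul', ← mul_pow, ← mul_pow, Nat.cast_mul, ← div_div]
    push_cast
    ring
  have hcomp : HasSum (H ∘ Φ) L := by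
    rw [hinj.hasSum_iff (fun q hq => absurd (hsurj q) hq)]
    exact hHsum
  exact hcomp.prod_fiberwise hfib


theorem stmt_13 (x y z : ℂ) (hx : ‖x‖ < 1) (hy : ‖y‖ < 1) (hz : ‖z‖ < 1)
    (hx1 : x ≠ 1) (hy1 : y ≠ 1) :
    (∏' p : {p : ℕ × ℕ × ℕ // 1 ≤ p.2.2 ∧ p.1 < p.2.2 ∧ p.2.1 < p.2.2 ∧
        Nat.gcd p.1 (Nat.gcd p.2.1 p.2.2) = 1},
      (1 / (1 - x ^ p.1.1 * y ^ p.1.2.1 * z ^ p.1.2.2)) ^ (1 / (p.1.2.2 : ℂ))) =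
    ((1 - x * z) * (1 - y * z) / ((1 - z) * (1 - x * y * z))) ^
      (1 / ((1 - x) * (1 - y))) := by
  have hT := aux_hasSum_T hx hy hz hx1 hy1
  have hprod := hT.cexp
  have h1 : (fun p : {p : ℕ × ℕ × ℕ // 1 ≤ p.2.2 ∧ p.1 < p.2.2 ∧ p.2.1 < p.2.2 ∧
        Nat.gcd p.1 (Nat.gcd p.2.1 p.2.2) = 1} =>
      (1 / (1 - x ^ p.1.1 * y ^ p.1.2.1 * z ^ p.1.2.2)) ^ (1 / (p.1.2.2 : ℂ))) =
      cexp ∘ (fun p : {p : ℕ × ℕ × ℕ // 1 ≤ p.2.2 ∧ p.1 < p.2.2 ∧ p.2.1 < p.2.2 ∧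
        Nat.gcd p.1 (Nat.gcd p.2.1 p.2.2) = 1} =>
      -Complex.log (1 - x ^ p.1.1 * y ^ p.1.2.1 * z ^ p.1.2.2) / (p.1.2.2 : ℂ)) := by
    funext p
    obtain ⟨⟨a, b, c⟩, hc, ha, hb, hg⟩ := p
    dsimp only [Function.comp]
    have hm := aux_mono_norm hx hy hz a b c hc
    have hne : 1 - x ^ a * y ^ b * z ^ c ≠ 0 := aux_one_sub_ne hm
    rw [Complex.cpow_def_of_ne_zero (one_div_ne_zero hne), one_div,
      Complex.log_inv _ (Complex.slitPlane_arg_ne_pi (aux_slit hm))]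
    congr 1
    rw [mul_one_div, neg_div]
  rw [h1, hprod.tprod_eq]
  have hxy : ‖x * y‖ ≤ 1 := by
    rw [norm_mul]
    nlinarith [norm_nonneg x, norm_nonneg y]
  have hQne : (1 - x * z) * (1 - y * z) / ((1 - z) * (1 - x * y * z)) ≠ 0 :=
    div_ne_zero
      (mul_ne_zero (aux_one_sub_ne (aux_norm_mul_lt hx.le hz))
        (aux_one_sub_ne (aux_norm_mul_lt hy.le hz)))
      (mul_ne_zero (aux_one_sub_ne hz) (aux_one_sub_ne (aux_norm_mul_lt hxy hz)))
  rw [Complex.cpow_def_of_ne_zero hQne, aux_branch hx hy hz]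
  congr 1
  rw [mul_one_div]
end

section
/- Let n ≥ 1 be an integer and let s_1, …, s_n ∈ ℂ with Re(s_i) > 1 for every i. Then the sum over all n-tuples of positive integers (a_1, …, a_n) with gcd(a_1, …, a_n) = 1 of 1/(a_1^{s_1} a_2^{s_2} ⋯ a_n^{s_n}) equals ζ(s_1) ζ(s_2) ⋯ ζ(s_n) / ζ(s_1 + s_2 + ⋯ + s_n), where ζ is the Riemann zeta function. -/
open Complex Finset Function

private lemma cpow_finset_sum {ι : Type*} (t : Finset ι) (x : ℂ) (hx : x ≠ 0) (f : ι → ℂ) :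
    x ^ (∑ i ∈ t, f i) = ∏ i ∈ t, x ^ f i := by
  classical
  induction t using Finset.induction with
  | empty => simp
  | insert _ _ h ih => rw [Finset.sum_insert h, Finset.prod_insert h, Complex.cpow_add _ _ hx, ih]

private lemma natCast_mul_cpow (a b : ℕ) (z : ℂ) :
    ((a * b : ℕ) : ℂ) ^ z = (a : ℂ) ^ z * (b : ℂ) ^ z := by
  have := mul_cpow_ofReal_nonneg (a := (a : ℝ)) (b := (b : ℝ)) (Nat.cast_nonneg a)
    (Nat.cast_nonneg b) z
  push_cast at this
  push_cast
  exact this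

private lemma tsum_pi_prod (n : ℕ) (f : Fin n → ℕ → ℂ)
    (hf : ∀ i, Summable fun k => ‖f i k‖) :
    Summable (fun a : Fin n → ℕ => ‖∏ i, f i (a i)‖) ∧
    ∑' a : Fin n → ℕ, ∏ i, f i (a i) = ∏ i, ∑' k, f i k := by
  induction n with
  | zero =>
    constructor
    · exact (hasSum_fintype _).summable
    · simp [tsum_fintype]
  | succ n ih =>
    obtain ⟨ihS, ihT⟩ := ih (fun i => f i.succ) (fun i => hf i.succ)
    set G : (Fin n → ℕ) → ℂ := fun b => ∏ i, f i.succ (b i) with hG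
    let e : (ℕ × (Fin n → ℕ)) ≃ (Fin (n + 1) → ℕ) := Fin.consEquiv fun _ => ℕ
    have ec : ∀ p : ℕ × (Fin n → ℕ), e p = Fin.cons p.1 p.2 := fun _ => rfl
    have key : ∀ p : ℕ × (Fin n → ℕ),
        ∏ i, f i (e p i) = f 0 p.1 * G p.2 := by
      intro p
      rw [ec, Fin.prod_univ_succ, Fin.cons_zero, hG]
      simp [Fin.cons_succ]
    have hS2 : Summable (fun p : ℕ × (Fin n → ℕ) => ‖f 0 p.1 * G p.2‖) :=
      (hf 0).mul_norm ihS
    constructor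
    · rw [← e.summable_iff]
      simpa only [comp_def, key] using hS2
    · rw [← e.tsum_eq]
      calc ∑' p : ℕ × (Fin n → ℕ), ∏ i, f i (e p i)
          = ∑' p : ℕ × (Fin n → ℕ), f 0 p.1 * G p.2 := tsum_congr key
        _ = (∑' k, f 0 k) * ∑' b : Fin n → ℕ, G b :=
            (tsum_mul_tsum_of_summable_norm (hf 0) ihS).symm
        _ = ∏ i, ∑' k, f i k := by rw [hG, ihT, Fin.prod_univ_succ]

theorem stmt_19 (n : ℕ) (hn : 1 ≤ n) (s : Fin n → ℂ) (hs : ∀ i, 1 < (s i).re) :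
    (∑' a : {a : Fin n → ℕ // (∀ i, 0 < a i) ∧ Finset.univ.gcd a = 1},
      1 / ∏ i, ((a.val i : ℂ) ^ s i)) =
    (∏ i, riemannZeta (s i)) / riemannZeta (∑ i, s i) := by
  classical
  have i0 : Fin n := ⟨0, hn⟩
  have hre : 1 < (∑ i, s i).re := by
    have h0 : ∀ i ∈ Finset.univ, 0 ≤ (s i).re := fun i _ =>
      le_of_lt (lt_trans zero_lt_one (hs i))
    calc (1 : ℝ) < (s i0).re := hs i0
      _ ≤ ∑ i, (s i).re := Finset.single_le_sum h0 (Finset.mem_univ i0)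
      _ = (∑ i, s i).re := (Complex.re_sum _ _).symm
  have hS0 : (∑ i, s i) ≠ 0 := by
    intro h; rw [h, Complex.zero_re] at hre; exact absurd hre (by norm_num)
  have hsne : ∀ i, s i ≠ 0 := by
    intro i h; have := hs i; rw [h, Complex.zero_re] at this; exact absurd this (by norm_num)
  set f : Fin n → ℕ → ℂ := fun i k => 1 / (k : ℂ) ^ (s i) with hfdef
  have hfs : ∀ i, Summable fun k => ‖f i k‖ := fun i =>
    summable_norm_iff.mpr (Complex.summable_one_div_nat_cpow.mpr (hs i))
  obtain ⟨hFsum, hFtsum⟩ := tsum_pi_prod n f hfs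
  set F : (Fin n → ℕ) → ℂ := fun a => ∏ i, f i (a i) with hFdef
  have hFsum' : Summable fun a : Fin n → ℕ => ‖F a‖ := by
    simp only [hFdef]; exact hFsum
  have hzeta : ∏ i, riemannZeta (s i) = ∑' a : Fin n → ℕ, F a := by
    rw [hFtsum]
    exact Finset.prod_congr rfl fun i _ => zeta_eq_tsum_one_div_nat_cpow (hs i)
  have hf0 : ∀ i, f i 0 = 0 := by
    intro i; simp only [hfdef]; rw [Nat.cast_zero, Complex.zero_cpow (hsne i)]; simp
  -- restrict to positive tuples
  have hsupp : Function.support F ⊆ {a : Fin n → ℕ | ∀ i, 0 < a i} := by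
    intro a ha
    intro i
    by_contra h
    push_neg at h
    have h0 : a i = 0 := Nat.le_zero.mp h
    apply ha
    simp only [hFdef]
    refine Finset.prod_eq_zero (Finset.mem_univ i) ?_
    rw [h0]; exact hf0 i
  have hP : ∑' p : {a : Fin n → ℕ | ∀ i, 0 < a i}, F p.1 = ∑' a, F a :=
    tsum_subtype_eq_of_support_subset hsupp
  -- the equiv
  have gcdpos : ∀ a : {a : Fin n → ℕ | ∀ i, 0 < a i}, 0 < Finset.univ.gcd a.1 := by
    intro a
    rcases Nat.eq_zero_or_pos (Finset.univ.gcd a.1) with h | h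
    · exfalso
      have := (Finset.gcd_eq_zero_iff.mp h) i0 (Finset.mem_univ i0)
      exact (a.2 i0).ne' this
    · exact h
  let E : {d : ℕ // 0 < d} × {a : Fin n → ℕ // (∀ i, 0 < a i) ∧ Finset.univ.gcd a = 1} ≃
      {a : Fin n → ℕ | ∀ i, 0 < a i} :=
    { toFun := fun p => ⟨fun i => p.1.1 * p.2.1 i, fun i => Nat.mul_pos p.1.2 (p.2.2.1 i)⟩
      invFun := fun a =>
        (⟨Finset.univ.gcd a.1, gcdpos a⟩,
         ⟨fun i => a.1 i / Finset.univ.gcd a.1,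
          fun i => Nat.div_pos (Nat.le_of_dvd (a.2 i) (Finset.gcd_dvd (Finset.mem_univ i)))
            (gcdpos a),
          by
            have hg := gcdpos a
            have hdvd : ∀ i : Fin n, Finset.univ.gcd a.1 ∣ a.1 i :=
              fun i => Finset.gcd_dvd (Finset.mem_univ i)
            have key : (Finset.univ.gcd fun i =>
                Finset.univ.gcd a.1 * (a.1 i / Finset.univ.gcd a.1)) = Finset.univ.gcd a.1 := by
              congr 1
              funext i
              exact Nat.mul_div_cancel' (hdvd i)
            rw [Finset.gcd_mul_left] at key
            have : Finset.univ.gcd a.1 * Finset.univ.gcd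
                (fun i => a.1 i / Finset.univ.gcd a.1) = Finset.univ.gcd a.1 * 1 := by
              simpa using key
            exact mul_left_cancel₀ hg.ne' this⟩)
      left_inv := by
        rintro ⟨⟨d, hd⟩, ⟨b, hb1, hb2⟩⟩
        have hgcd : (Finset.univ.gcd fun i => d * b i) = d := by
          rw [Finset.gcd_mul_left, hb2]
          simp
        ext i
        · simp only [hgcd]
        · simp only [hgcd]
          exact Nat.mul_div_cancel_left _ hd
      right_inv := by
        rintro ⟨a, ha⟩
        apply Subtype.ext
        funext i
        exact Nat.mul_div_cancel' (Finset.gcd_dvd (Finset.mem_univ i)) }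
  have hEsum : ∑' p : {d : ℕ // 0 < d} ×
      {a : Fin n → ℕ // (∀ i, 0 < a i) ∧ Finset.univ.gcd a = 1},
      F (E p).1 = ∑' q : {a : Fin n → ℕ | ∀ i, 0 < a i}, F q.1 :=
    E.tsum_eq fun q => F q.1
  -- term computation
  have hmul : ∀ (d : ℕ), d ≠ 0 → ∀ b : Fin n → ℕ,
      F (fun i => d * b i) = (1 / (d : ℂ) ^ (∑ i, s i)) * F b := by
    intro d hd b
    have hd0 : (d : ℂ) ≠ 0 := Nat.cast_ne_zero.mpr hd
    simp only [hFdef, hfdef]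
    have step1 : ∀ i : Fin n, (1 : ℂ) / ((d * b i : ℕ) : ℂ) ^ s i =
        (1 / (d : ℂ) ^ s i) * (1 / ((b i : ℕ) : ℂ) ^ s i) := by
      intro i
      rw [natCast_mul_cpow, one_div_mul_one_div]
    rw [Finset.prod_congr rfl fun i _ => step1 i, Finset.prod_mul_distrib]
    congr 1
    rw [cpow_finset_sum Finset.univ (d : ℂ) hd0 s]
    simp only [one_div]
    rw [← Finset.prod_inv_distrib]
  have hterm : ∀ p : {d : ℕ // 0 < d} ×
      {a : Fin n → ℕ // (∀ i, 0 < a i) ∧ Finset.univ.gcd a = 1},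
      F (E p).1 = (1 / (p.1.1 : ℂ) ^ (∑ i, s i)) * F p.2.1 := by
    rintro ⟨⟨d, hd⟩, ⟨b, hb⟩⟩
    exact hmul d hd.ne' b
  -- summability of factors
  have hsum1 : Summable fun d : {d : ℕ // 0 < d} => ‖1 / (d.1 : ℂ) ^ (∑ i, s i)‖ := by
    have : Summable fun k : ℕ => ‖1 / (k : ℂ) ^ (∑ i, s i)‖ :=
      summable_norm_iff.mpr (Complex.summable_one_div_nat_cpow.mpr hre)
    exact this.comp_injective Subtype.val_injective
  have hsum2 : Summable fun b : {a : Fin n → ℕ // (∀ i, 0 < a i) ∧ Finset.univ.gcd a = 1} =>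
      ‖F b.1‖ := hFsum'.comp_injective Subtype.val_injective
  have hfact : ∑' p : {d : ℕ // 0 < d} ×
      {a : Fin n → ℕ // (∀ i, 0 < a i) ∧ Finset.univ.gcd a = 1},
      (1 / (p.1.1 : ℂ) ^ (∑ i, s i)) * F p.2.1 =
      (∑' d : {d : ℕ // 0 < d}, 1 / (d.1 : ℂ) ^ (∑ i, s i)) *
      ∑' b : {a : Fin n → ℕ // (∀ i, 0 < a i) ∧ Finset.univ.gcd a = 1}, F b.1 :=
    (tsum_mul_tsum_of_summable_norm hsum1 hsum2).symm
  -- the d-sum is zeta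
  have hD : ∑' d : {d : ℕ // 0 < d}, 1 / (d.1 : ℂ) ^ (∑ i, s i) =
      riemannZeta (∑ i, s i) := by
    rw [zeta_eq_tsum_one_div_nat_cpow hre]
    have : ∑' d : {k : ℕ | 0 < k}, 1 / ((d : ℕ) : ℂ) ^ (∑ i, s i) =
        ∑' k : ℕ, 1 / (k : ℂ) ^ (∑ i, s i) := by
      refine tsum_subtype_eq_of_support_subset
        (f := fun k : ℕ => 1 / (k : ℂ) ^ (∑ i, s i)) (s := {k : ℕ | 0 < k}) ?_
      intro k hk
      rcases Nat.eq_zero_or_pos k with h | h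
      · exfalso
        apply hk
        show (1 : ℂ) / (k : ℂ) ^ (∑ i, s i) = 0
        rw [h, Nat.cast_zero, Complex.zero_cpow hS0, div_zero]
      · exact h
    exact this
  -- assemble
  have main : ∏ i, riemannZeta (s i) = riemannZeta (∑ i, s i) *
      ∑' b : {a : Fin n → ℕ // (∀ i, 0 < a i) ∧ Finset.univ.gcd a = 1}, F b.1 := by
    rw [hzeta, ← hP, ← hEsum, tsum_congr hterm, hfact, hD]
  have hCF : (∑' a : {a : Fin n → ℕ // (∀ i, 0 < a i) ∧ Finset.univ.gcd a = 1},
      1 / ∏ i, ((a.val i : ℂ) ^ s i)) =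
      ∑' b : {a : Fin n → ℕ // (∀ i, 0 < a i) ∧ Finset.univ.gcd a = 1}, F b.1 := by
    refine tsum_congr fun b => ?_
    simp only [hFdef, hfdef, one_div]
    rw [← Finset.prod_inv_distrib]
  rw [hCF, eq_div_iff (riemannZeta_ne_zero_of_one_lt_re hre), mul_comm]
  exact main.symm
end
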